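/- arXiv:1807.03435 — 8 statements merged into one kernel-verified Lean document; each statement's English description precedes it below -/
import Mathlib

section
/- If z_1, ..., z_n are independent Bernoulli random variables with P[z_i = 1] = s_i summing to s, and Z is their sum, then 2·P[Z = 0] + P[Z = 1] ≤ 2(1 - s/n)^n + s(1 - s/n)^{n-1}. -/
open MeasureTheory ProbabilityTheory Finset


noncomputable def Fv (n : ℕ) (t : Fin n → ℝ) : ℝ :=
  (2 - (n : ℝ)) * ∏ i, t i + ∑ j, ∏ i ∈ univ.erase j, t i

lemma Fv_decomp (n : ℕ) (t : Fin n → ℝ) {i j : Fin n} (hij : i ≠ j) (x y : ℝ) :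
    Fv n (Function.update (Function.update t i x) j y)
      = ((2 - (n : ℝ)) * (∏ k ∈ (univ.erase i).erase j, t k)
          + ∑ k ∈ (univ.erase i).erase j, ∏ l ∈ ((univ.erase i).erase j).erase k, t l) * (x * y)
        + (∏ k ∈ (univ.erase i).erase j, t k) * (x + y) := by
  set t' := Function.update (Function.update t i x) j y with ht'
  set s : Finset (Fin n) := (univ.erase i).erase j with hsdef
  have hjs : j ∉ s := by simp [hsdef]
  have his : i ∉ s := by simp [hsdef]
  have hti : t' i = x := by
    rw [ht', Function.update_of_ne hij, Function.update_self]
  have htj : t' j = y := by rw [ht', Function.update_self]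
  have htk : ∀ k ∈ s, t' k = t k := by
    intro k hk
    have hki : k ≠ i := by simp [hsdef] at hk; exact hk.2
    have hkj : k ≠ j := by simp [hsdef] at hk; exact hk.1
    rw [ht', Function.update_of_ne hkj, Function.update_of_ne hki]
  have hprods : ∏ k ∈ s, t' k = ∏ k ∈ s, t k := Finset.prod_congr rfl htk
  -- full product
  have hP : ∏ k, t' k = x * y * ∏ k ∈ s, t k := by
    rw [← Finset.mul_prod_erase univ t' (mem_univ i),
      ← Finset.mul_prod_erase (univ.erase i) t'
        (Finset.mem_erase.mpr ⟨hij.symm, mem_univ j⟩), hti, htj, ← hsdef, hprods, mul_assoc]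
  -- sum of erase-products
  have hterm_i : ∏ k ∈ univ.erase i, t' k = y * ∏ k ∈ s, t k := by
    rw [← Finset.mul_prod_erase (univ.erase i) t'
      (Finset.mem_erase.mpr ⟨hij.symm, mem_univ j⟩), htj, ← hsdef, hprods]
  have herase_comm : (univ.erase j).erase i = s := by
    rw [hsdef, Finset.erase_right_comm]
  have hterm_j : ∏ k ∈ univ.erase j, t' k = x * ∏ k ∈ s, t k := by
    rw [← Finset.mul_prod_erase (univ.erase j) t'
      (Finset.mem_erase.mpr ⟨hij, mem_univ i⟩), hti, herase_comm, hprods]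
  have hterm_k : ∀ k ∈ s, ∏ l ∈ univ.erase k, t' l = x * y * ∏ l ∈ s.erase k, t l := by
    intro k hk
    have hki : k ≠ i := by simp [hsdef] at hk; exact hk.2
    have hkj : k ≠ j := by simp [hsdef] at hk; exact hk.1
    have h1 : i ∈ univ.erase k := Finset.mem_erase.mpr ⟨hki.symm, mem_univ i⟩
    have h2 : j ∈ (univ.erase k).erase i :=
      Finset.mem_erase.mpr ⟨hij.symm, Finset.mem_erase.mpr ⟨hkj.symm, mem_univ j⟩⟩
    have h3 : ((univ.erase k).erase i).erase j = s.erase k := by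
      rw [hsdef]; ext l
      simp only [Finset.mem_erase, mem_univ, and_true]
      tauto
    rw [← Finset.mul_prod_erase (univ.erase k) t' h1,
      ← Finset.mul_prod_erase ((univ.erase k).erase i) t' h2, hti, htj, h3,
      Finset.prod_congr rfl (fun l hl => htk l (Finset.mem_of_mem_erase hl)), ← mul_assoc]
  have hsum : ∑ j', ∏ k ∈ univ.erase j', t' k
      = y * ∏ k ∈ s, t k + (x * ∏ k ∈ s, t k
        + ∑ k ∈ s, (x * y * ∏ l ∈ s.erase k, t l)) := by
    rw [← Finset.add_sum_erase univ _ (mem_univ i),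
      ← Finset.add_sum_erase (univ.erase i) _ (Finset.mem_erase.mpr ⟨hij.symm, mem_univ j⟩),
      hterm_i, hterm_j, ← hsdef, Finset.sum_congr rfl hterm_k]
  rw [Fv, hP, hsum, ← Finset.mul_sum]
  ring

lemma pair_step (n : ℕ) (t : Fin n → ℝ) (ht : ∀ k, 0 ≤ t k ∧ t k ≤ 1)
    {i j : Fin n} (hij : i ≠ j) (a b : ℝ) (hab : a + b = t i + t j)
    (hprod : t i * t j ≤ a * b) :
    Fv n t ≤ Fv n (Function.update (Function.update t i a) j b) := by
  set s : Finset (Fin n) := (univ.erase i).erase j with hsdef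
  set P : ℝ := ∏ k ∈ s, t k with hP
  set Q : ℝ := ∑ k ∈ s, ∏ l ∈ s.erase k, t l with hQ
  have hcard : s.card = n - 2 := by
    rw [hsdef, Finset.card_erase_of_mem (Finset.mem_erase.mpr ⟨hij.symm, mem_univ j⟩),
      Finset.card_erase_of_mem (mem_univ i), Finset.card_univ, Fintype.card_fin]
    omega
  have hn2 : 2 ≤ n := by
    have : 1 < Fintype.card (Fin n) := Fintype.one_lt_card_iff_nontrivial.mpr ⟨⟨i, j, hij⟩⟩
    simpa [Nat.succ_le_iff] using this
  have hPnn : 0 ≤ P := Finset.prod_nonneg fun k _ => (ht k).1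
  have hterm : ∀ k ∈ s, P ≤ ∏ l ∈ s.erase k, t l := by
    intro k hk
    have : P = t k * ∏ l ∈ s.erase k, t l := (Finset.mul_prod_erase s t hk).symm
    have hnn : 0 ≤ ∏ l ∈ s.erase k, t l := Finset.prod_nonneg fun l _ => (ht l).1
    nlinarith [(ht k).2]
  have hQP : (n - 2 : ℝ) * P ≤ Q := by
    have : ∑ k ∈ s, P ≤ Q := Finset.sum_le_sum hterm
    rwa [Finset.sum_const, hcard, nsmul_eq_mul, Nat.cast_sub hn2, Nat.cast_ofNat] at this
  have hA : 0 ≤ (2 - (n : ℝ)) * P + Q := by linarith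
  have ht_eq : t = Function.update (Function.update t i (t i)) j (t j) := by
    simp [Function.update_eq_self]
  calc Fv n t = ((2 - (n : ℝ)) * P + Q) * (t i * t j) + P * (t i + t j) := by
        conv_lhs => rw [ht_eq]
        exact Fv_decomp n t hij (t i) (t j)
    _ ≤ ((2 - (n : ℝ)) * P + Q) * (a * b) + P * (a + b) := by
        rw [hab]
        have := mul_le_mul_of_nonneg_left hprod hA
        linarith
    _ = Fv n (Function.update (Function.update t i a) j b) := (Fv_decomp n t hij a b).symm

lemma smooth_aux (n : ℕ) : ∀ (N : ℕ) (t : Fin n → ℝ), (∀ k, 0 ≤ t k ∧ t k ≤ 1) →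
    ∀ (u : ℝ), ∑ k, t k = n * u →
    (univ.filter (fun k => t k ≠ u)).card ≤ N → Fv n t ≤ Fv n (fun _ => u) := by
  intro N
  induction N with
  | zero =>
    intro t ht u hu hcard
    have : ∀ k, t k = u := by
      intro k
      by_contra h
      have : k ∈ univ.filter (fun k => t k ≠ u) := by simp [h]
      have := Finset.card_pos.mpr ⟨k, this⟩
      omega
    have : t = fun _ => u := funext this
    rw [this]
  | succ N ih =>
    intro t ht u hu hcard
    by_cases hall : ∀ k, t k = u
    · rw [funext hall]
    push_neg at hall
    obtain ⟨i₀, hi₀⟩ := hall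
    -- find i with t i < u and j with t j > u
    have hsum0 : ∑ k, (t k - u) = 0 := by
      rw [Finset.sum_sub_distrib, hu, Finset.sum_const, Finset.card_univ, Fintype.card_fin,
        nsmul_eq_mul]
      ring
    have hexists : ∃ i j, t i < u ∧ u < t j := by
      have hup : (∃ k, t k < u) → ∃ j, u < t j := by
        rintro ⟨k0, hk0⟩
        by_contra hc
        push_neg at hc
        have : ∑ k, (t k - u) < ∑ k : Fin n, (0:ℝ) :=
          Finset.sum_lt_sum (fun k _ => sub_nonpos.mpr (hc k)) ⟨k0, mem_univ k0, by linarith⟩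
        simp [hsum0] at this
      have hdn : (∃ k, u < t k) → ∃ i, t i < u := by
        rintro ⟨k0, hk0⟩
        by_contra hc
        push_neg at hc
        have : ∑ k : Fin n, (0:ℝ) < ∑ k, (t k - u) :=
          Finset.sum_lt_sum (fun k _ => sub_nonneg.mpr (hc k)) ⟨k0, mem_univ k0, by linarith⟩
        simp [hsum0] at this
      rcases lt_or_gt_of_ne hi₀ with h | h
      · obtain ⟨j, hj⟩ := hup ⟨i₀, h⟩
        exact ⟨i₀, j, h, hj⟩
      · obtain ⟨i, hi⟩ := hdn ⟨i₀, h⟩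
        exact ⟨i, i₀, hi, h⟩
    obtain ⟨i, j, hi, hj⟩ := hexists
    have hij : i ≠ j := fun h => by rw [h] at hi; linarith
    set b : ℝ := t i + t j - u with hb
    set t' : Fin n → ℝ := Function.update (Function.update t i u) j b with ht'def
    have ht'i : t' i = u := by
      rw [ht'def, Function.update_of_ne hij, Function.update_self]
    have ht'j : t' j = b := by rw [ht'def, Function.update_self]
    have ht'k : ∀ k, k ≠ i → k ≠ j → t' k = t k := fun k hki hkj => by
      rw [ht'def, Function.update_of_ne hkj, Function.update_of_ne hki]
    have hu0 : 0 ≤ u := le_trans (ht i).1 hi.le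
    have hu1 : u ≤ 1 := le_trans hj.le (ht j).2
    have hb0 : 0 ≤ b := by have := (ht i).1; simp only [hb]; linarith
    have hb1 : b ≤ 1 := by have := (ht j).2; simp only [hb]; linarith
    have ht' : ∀ k, 0 ≤ t' k ∧ t' k ≤ 1 := by
      intro k
      by_cases hkj : k = j
      · rw [hkj, ht'j]; exact ⟨hb0, hb1⟩
      by_cases hki : k = i
      · rw [hki, ht'i]; exact ⟨hu0, hu1⟩
      · rw [ht'k k hki hkj]; exact ht k
    have hiej : i ∈ univ.erase j := Finset.mem_erase.mpr ⟨hij, mem_univ i⟩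
    have hsum' : ∑ k, t' k = n * u := by
      rw [ht'def, Finset.sum_update_of_mem (mem_univ j), ← Finset.erase_eq,
        Finset.sum_update_of_mem hiej, ← Finset.erase_eq]
      have h2 : ∑ k, t k = t j + (t i + ∑ k ∈ (univ.erase j).erase i, t k) := by
        rw [← Finset.add_sum_erase univ t (mem_univ j), ← Finset.add_sum_erase _ t hiej]
      rw [h2] at hu
      simp only [hb]
      linarith
    have hcard' : (univ.filter (fun k => t' k ≠ u)).card ≤ N := by
      have hsub : univ.filter (fun k => t' k ≠ u) ⊆ (univ.filter (fun k => t k ≠ u)).erase i := by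
        intro k hk
        simp only [Finset.mem_filter, mem_univ, true_and] at hk
        have hki : k ≠ i := fun h => hk (by rw [h, ht'i])
        refine Finset.mem_erase.mpr ⟨hki, Finset.mem_filter.mpr ⟨mem_univ k, ?_⟩⟩
        by_cases hkj : k = j
        · rw [hkj]; exact ne_of_gt hj
        · rw [← ht'k k hki hkj]; exact hk
      have hi_mem : i ∈ univ.filter (fun k => t k ≠ u) := by
        simp [ne_of_lt hi]
      have h1 := Finset.card_le_card hsub
      rw [Finset.card_erase_of_mem hi_mem] at h1
      have h2 := Finset.card_pos.mpr ⟨i, hi_mem⟩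
      omega
    have hstep : Fv n t ≤ Fv n t' := by
      apply pair_step n t (fun k => ht k) hij u b
      · simp only [hb]; ring
      · nlinarith
    exact hstep.trans (ih t' ht' u hsum' hcard')

lemma Fv_const (n : ℕ) (hn : 0 < n) (u : ℝ) :
    Fv n (fun _ => u) = (2 - (n : ℝ)) * u ^ n + n * u ^ (n - 1) := by
  rw [Fv]
  congr 1
  · rw [Finset.prod_const, Finset.card_univ, Fintype.card_fin]
  · have : ∀ j : Fin n, ∏ i ∈ univ.erase j, u = u ^ (n - 1) := by
      intro j
      rw [Finset.prod_const, Finset.card_erase_of_mem (mem_univ j), Finset.card_univ,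
        Fintype.card_fin]
    rw [Finset.sum_congr rfl (fun j _ => this j), Finset.sum_const, Finset.card_univ,
      Fintype.card_fin, nsmul_eq_mul]

lemma keyIneq (n : ℕ) (hn : 0 < n) (s : Fin n → ℝ) (h01 : ∀ i, s i ∈ Set.Icc (0:ℝ) 1) :
    2 * ∏ i, (1 - s i) + ∑ i, s i * ∏ j ∈ univ.erase i, (1 - s j)
      ≤ 2 * (1 - (∑ i, s i) / n) ^ n + (∑ i, s i) * (1 - (∑ i, s i) / n) ^ (n - 1) := by
  set t : Fin n → ℝ := fun i => 1 - s i with htdef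
  set u : ℝ := 1 - (∑ i, s i) / n with hudef
  have hnR : (0:ℝ) < n := Nat.cast_pos.mpr hn
  have ht : ∀ k, 0 ≤ t k ∧ t k ≤ 1 := fun k => by
    have := h01 k
    constructor <;> simp only [htdef] <;> [linarith [this.2]; linarith [this.1]]
  have hsumt : ∑ k, t k = n * u := by
    simp only [htdef, hudef, Finset.sum_sub_distrib, Finset.sum_const, Finset.card_univ,
      Fintype.card_fin, nsmul_eq_mul, mul_one]
    field_simp
  have hmain := smooth_aux n n t ht u hsumt (le_trans (Finset.card_le_card (Finset.subset_univ _))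
    (by rw [Finset.card_univ, Fintype.card_fin]))
  rw [Fv_const n hn] at hmain
  -- relate LHS to Fv n t
  have hlhs : 2 * ∏ i, (1 - s i) + ∑ i, s i * ∏ j ∈ univ.erase i, (1 - s j) = Fv n t := by
    rw [Fv]
    have hterm : ∀ i : Fin n, s i * ∏ j ∈ univ.erase i, t j
        = ∏ j ∈ univ.erase i, t j - ∏ j, t j := by
      intro i
      have : ∏ j, t j = t i * ∏ j ∈ univ.erase i, t j :=
        (Finset.mul_prod_erase univ t (mem_univ i)).symm
      rw [this]
      simp only [htdef]
      ring
    rw [Finset.sum_congr rfl (fun i _ => hterm i), Finset.sum_sub_distrib, Finset.sum_const,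
      Finset.card_univ, Fintype.card_fin, nsmul_eq_mul]
    simp only [htdef]
    ring
  rw [hlhs]
  refine hmain.trans_eq ?_
  have hsu : (∑ i, s i) = n * (1 - u) := by
    simp only [hudef]
    field_simp
    ring
  have hpow : u ^ n = u * u ^ (n - 1) := by
    conv_lhs => rw [show n = 1 + (n - 1) by omega]
    rw [pow_add, pow_one]
  rw [hsu, hpow]
  ring

theorem stmt_2 {Ω : Type*} [MeasurableSpace Ω] (μ : Measure Ω)
    [IsProbabilityMeasure μ] (n : ℕ) (hn : 0 < n)
    (z : Fin n → Ω → ℝ) (s : Fin n → ℝ)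
    (hmeas : ∀ i, Measurable (z i))
    (hind : iIndepFun z μ)
    (hval : ∀ i ω, z i ω = 0 ∨ z i ω = 1)
    (hs : ∀ i, (μ {ω | z i ω = 1}).toReal = s i)
    (hs01 : ∀ i, s i ∈ Set.Icc (0:ℝ) 1) :
    2 * (μ {ω | ∑ i, z i ω = 0}).toReal + (μ {ω | ∑ i, z i ω = 1}).toReal
      ≤ 2 * (1 - (∑ i, s i) / n) ^ n +
        (∑ i, s i) * (1 - (∑ i, s i) / n) ^ (n - 1) := by
  set A : Fin n → Set Ω := fun i => {ω | z i ω = 1} with hA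
  set B : Fin n → Set Ω := fun i => {ω | z i ω = 0} with hB
  have hApre : ∀ i, A i = z i ⁻¹' {1} := fun i => rfl
  have hBpre : ∀ i, B i = z i ⁻¹' {0} := fun i => rfl
  have hAmeas : ∀ i, MeasurableSet (A i) := fun i => hmeas i (measurableSet_singleton 1)
  have hBmeas : ∀ i, MeasurableSet (B i) := fun i => hmeas i (measurableSet_singleton 0)
  have hAcomap : ∀ i, MeasurableSet[MeasurableSpace.comap (z i) inferInstance] (A i) :=
    fun i => ⟨{1}, measurableSet_singleton 1, rfl⟩
  have hBcomap : ∀ i, MeasurableSet[MeasurableSpace.comap (z i) inferInstance] (B i) :=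
    fun i => ⟨{0}, measurableSet_singleton 0, rfl⟩
  have hcompl : ∀ i, B i = (A i)ᶜ := by
    intro i
    ext ω
    simp only [hA, hB, Set.mem_setOf_eq, Set.mem_compl_iff]
    rcases hval i ω with h | h <;> simp [h]
  have hAne : ∀ i, μ (A i) ≠ ⊤ := fun i => measure_ne_top μ _
  have hμB : ∀ i, μ (B i) = 1 - μ (A i) := by
    intro i
    rw [hcompl i, measure_compl (hAmeas i) (hAne i), measure_univ]
  have hBtoReal : ∀ i, (μ (B i)).toReal = 1 - s i := by
    intro i
    rw [hμB i, ENNReal.toReal_sub_of_le prob_le_one ENNReal.one_ne_top, ENNReal.toReal_one, hs i]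
  -- event Z = 0
  have hE0 : {ω | ∑ i, z i ω = 0} = ⋂ i, B i := by
    ext ω
    simp only [Set.mem_setOf_eq, Set.mem_iInter, hB]
    constructor
    · intro h i
      exact (Finset.sum_eq_zero_iff_of_nonneg
        (fun j _ => by rcases hval j ω with h' | h' <;> simp [h'])).mp h i (mem_univ i)
    · intro h
      exact Finset.sum_eq_zero fun i _ => h i
  have hμ0 : (μ {ω | ∑ i, z i ω = 0}).toReal = ∏ i, (1 - s i) := by
    rw [hE0, hind.meas_iInter hBcomap, ENNReal.toReal_prod]
    exact Finset.prod_congr rfl fun i _ => hBtoReal i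
  -- event Z = 1
  set D : Fin n → Fin n → Set Ω := fun i j => if j = i then A i else B j with hD
  have hDcomap : ∀ i j, MeasurableSet[MeasurableSpace.comap (z j) inferInstance] (D i j) := by
    intro i j
    by_cases h : j = i
    · subst h; simpa [hD] using hAcomap j
    · simpa [hD, h] using hBcomap j
  have hDmeas : ∀ i j, MeasurableSet (D i j) := by
    intro i j
    by_cases h : j = i
    · subst h; simpa [hD] using hAmeas j
    · simpa [hD, h] using hBmeas j
  have hsum_card : ∀ ω, ∑ i, z i ω = ((univ.filter (fun i => z i ω = 1)).card : ℝ) := by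
    intro ω
    rw [Finset.card_filter]
    push_cast
    exact Finset.sum_congr rfl fun i _ => by rcases hval i ω with h | h <;> simp [h]
  have hE1 : {ω | ∑ i, z i ω = 1} = ⋃ i, ⋂ j, D i j := by
    ext ω
    simp only [Set.mem_setOf_eq, Set.mem_iUnion, Set.mem_iInter]
    rw [hsum_card ω]
    rw [show ((univ.filter (fun i => z i ω = 1)).card : ℝ) = 1 ↔
        (univ.filter (fun i => z i ω = 1)).card = 1 by exact_mod_cast Iff.rfl]
    rw [Finset.card_eq_one]
    constructor
    · rintro ⟨a, ha⟩
      refine ⟨a, fun j => ?_⟩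
      by_cases hj : j = a
      · subst hj
        have : j ∈ univ.filter (fun i => z i ω = 1) := ha ▸ Finset.mem_singleton_self j
        simp only [Finset.mem_filter] at this
        simp [hD, hA, this.2]
      · have : j ∉ univ.filter (fun i => z i ω = 1) := by
          rw [ha]; simp [hj]
        simp only [Finset.mem_filter, mem_univ, true_and] at this
        rcases hval j ω with h | h
        · simp [hD, hj, hB, h]
        · exact absurd h this
    · rintro ⟨a, ha⟩
      refine ⟨a, ?_⟩
      ext j
      simp only [Finset.mem_filter, mem_univ, true_and, Finset.mem_singleton]
      constructor
      · intro hj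
        by_contra hja
        have := ha j
        simp only [hD, if_neg hja, hB, Set.mem_setOf_eq] at this
        rw [this] at hj; norm_num at hj
      · intro hj
        subst hj
        have := ha j
        simpa [hD, hA] using this
  have hdisj : Pairwise (Function.onFun Disjoint (fun i => ⋂ j, D i j)) := by
    intro i j hij
    rw [Function.onFun, Set.disjoint_left]
    intro ω hωi hωj
    have h1 : ω ∈ D i i := Set.mem_iInter.mp hωi i
    have h2 : ω ∈ D j i := Set.mem_iInter.mp hωj i
    simp only [hD, if_pos rfl, hA, Set.mem_setOf_eq] at h1
    simp only [hD, if_neg hij, hB, Set.mem_setOf_eq] at h2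
    rw [h1] at h2; norm_num at h2
  have hμC : ∀ i, μ (⋂ j, D i j) = μ (A i) * ∏ j ∈ univ.erase i, μ (B j) := by
    intro i
    rw [hind.meas_iInter (hDcomap i), ← Finset.mul_prod_erase univ _ (mem_univ i)]
    congr 1
    · simp [hD]
    · exact Finset.prod_congr rfl fun j hj => by
        simp [hD, (Finset.mem_erase.mp hj).1]
  have hμ1 : (μ {ω | ∑ i, z i ω = 1}).toReal = ∑ i, s i * ∏ j ∈ univ.erase i, (1 - s j) := by
    rw [hE1, measure_iUnion hdisj (fun i => MeasurableSet.iInter (hDmeas i)), tsum_fintype,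
      ENNReal.toReal_sum (fun i _ => measure_ne_top μ _)]
    refine Finset.sum_congr rfl fun i _ => ?_
    rw [hμC i, ENNReal.toReal_mul, ENNReal.toReal_prod, hs i]
    congr 1
    exact Finset.prod_congr rfl fun j _ => hBtoReal j
  rw [hμ0, hμ1]
  exact keyIneq n hn s hs01
end

section
/- For real s_1, ..., s_n in [0,1] with fixed sum s, the symmetric polynomial P(s_1,...,s_n) = 2·∏_{i∈[n]}(1 - s_i) + ∑_{i∈[n]} s_i ∏_{j≠i}(1 - s_j) is maximized when s_1 = s_2 = ... = s_n = s/n; i.e., P(s_1,...,s_n) ≤ 2(1 - s/n)^n + s(1 - s/n)^{n-1}. -/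
open Finset

lemma tangent_pow (k : ℕ) {x y : ℝ} (hx : 0 ≤ x) (hy : 0 ≤ y) :
    y ^ k + k * y ^ (k - 1) * (x - y) ≤ x ^ k := by
  rcases Nat.eq_zero_or_pos k with hk | hk
  · subst hk; simp
  rcases eq_or_lt_of_le hy with hy0 | hy0
  · -- y = 0
    rcases Nat.lt_or_ge k 2 with hk2 | hk2
    · interval_cases k
      simp [← hy0]
    · rw [← hy0]
      have h1 : (0:ℝ) ^ k = 0 := zero_pow hk.ne'
      have h2 : (0:ℝ) ^ (k-1) = 0 := zero_pow (by omega)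
      rw [h1, h2]
      simpa using pow_nonneg hx k
  · have ha : (-2:ℝ) ≤ x / y - 1 := by
      have : 0 ≤ x / y := div_nonneg hx hy0.le
      linarith
    have hb := one_add_mul_le_pow ha k
    rw [show (1 : ℝ) + (x / y - 1) = x / y by ring] at hb
    have hyk : (0:ℝ) < y ^ k := pow_pos hy0 k
    have hmul := mul_le_mul_of_nonneg_right hb hyk.le
    have h2 : (x / y) ^ k * y ^ k = x ^ k := by
      rw [div_pow]
      field_simp
    have hk1 : k - 1 + 1 = k := Nat.succ_pred_eq_of_pos hk
    have h3 : (1 + (k:ℝ) * (x / y - 1)) * y ^ k = y ^ k + k * y ^ (k-1) * (x - y) := by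
      have hyy : y ^ k = y ^ (k-1) * y := by rw [← pow_succ, hk1]
      rw [hyy]
      field_simp
    rw [h2, h3] at hmul
    exact hmul

lemma tangent_main (m : ℕ) (hm : 1 ≤ m) {T U : ℝ} (hT : T ∈ Set.Icc (0:ℝ) 1)
    (hU : U ∈ Set.Icc (0:ℝ) 1) :
    (((m:ℝ)+1) * U^m - ((m:ℝ)-1) * U^(m+1))
      + ((((m:ℝ)+1)*(m:ℝ)) * U^(m-1) - (((m:ℝ)-1)*((m:ℝ)+1)) * U^m) * (T - U)
    ≤ ((m:ℝ)+1) * T^m - ((m:ℝ)-1) * T^(m+1) := by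
  set M : ℝ := (m:ℝ) with hM
  set P : ℝ → ℝ := fun z => (M+1) * z^m - (M-1) * z^(m+1) with hP
  set P1 : ℝ → ℝ := fun z => ((M+1)*M) * z^(m-1) - ((M-1)*(M+1)) * z^m with hP1
  set P2 : ℝ → ℝ := fun z =>
    ((M+1)*M) * (((m-1 : ℕ):ℝ) * z^(m-1-1)) - ((M-1)*(M+1)) * ((m:ℝ) * z^(m-1)) with hP2
  have hcast : ((m-1 : ℕ):ℝ) = M - 1 := by
    rw [hM]; push_cast [hm]; ring
  have hDP : ∀ z : ℝ, HasDerivAt P (P1 z) z := by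
    intro z
    have h1 := (hasDerivAt_pow m z).const_mul (M+1)
    have h2 := (hasDerivAt_pow (m+1) z).const_mul (M-1)
    have := h1.sub h2
    convert this using 1
    · rfl
    · rfl
    · rfl
    simp only [Nat.add_sub_cancel, hP1, hM]
    push_cast
    ring
  have hDP1 : ∀ z : ℝ, HasDerivAt P1 (P2 z) z := by
    intro z
    have h1 := (hasDerivAt_pow (m-1) z).const_mul ((M+1)*M)
    have h2 := (hasDerivAt_pow m z).const_mul ((M-1)*(M+1))
    exact h1.sub h2
  have hconv : ConvexOn ℝ (Set.Icc (0:ℝ) 1) P := by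
    apply convexOn_of_hasDerivWithinAt2_nonneg (convex_Icc 0 1)
      (Continuous.continuousOn (by fun_prop))
      (f' := P1) (f'' := P2)
    · intro z hz
      exact (hDP z).hasDerivWithinAt
    · intro z hz
      exact (hDP1 z).hasDerivWithinAt
    · intro z hz
      rw [interior_Icc] at hz
      simp only [hP2, hcast]
      have hz0 : (0:ℝ) < z := hz.1
      have hz1 : z < 1 := hz.2
      have hpow : z^(m-1) ≤ z^(m-1-1) := pow_le_pow_of_le_one hz0.le hz1.le (by omega)
      have h1M : (1:ℝ) ≤ M := by rw [hM]; exact_mod_cast hm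
      have hfac : (0:ℝ) ≤ (M+1)*M*(M-1) := mul_nonneg (mul_nonneg (by linarith) (by linarith)) (by linarith)
      calc (M+1)*M*(((M-1)) * z^(m-1-1)) - (M-1)*(M+1)*((m:ℝ) * z^(m-1))
          = ((M+1)*M*(M-1)) * (z^(m-1-1) - z^(m-1)) := by rw [hM]; ring
        _ ≥ 0 := by
            apply mul_nonneg hfac
            linarith
  -- now tangent
  have goal_eq : ∀ a : ℝ, P a = (M+1) * a^m - (M-1) * a^(m+1) := fun a => rfl
  show P U + P1 U * (T - U) ≤ P T
  rcases lt_trichotomy U T with h | h | h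
  · have hs := hconv.le_slope_of_hasDerivAt hU hT h (hDP U)
    rw [slope_def_field] at hs
    have := (le_div_iff₀ (by linarith : (0:ℝ) < T - U)).mp hs
    linarith
  · subst h; simp
  · have hs := hconv.slope_le_of_hasDerivAt hT hU h (hDP U)
    rw [slope_def_field] at hs
    have := (div_le_iff₀ (by linarith : (0:ℝ) < U - T)).mp hs
    linarith

lemma amgm {ι : Type*} [DecidableEq ι] (A : Finset ι) (t : ι → ℝ)
    (h0 : ∀ i ∈ A, 0 ≤ t i) {U : ℝ} (hU : 0 ≤ U)
    (hsum : ∑ i ∈ A, t i = A.card * U) :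
    ∏ i ∈ A, t i ≤ U ^ A.card := by
  induction A using Finset.cons_induction generalizing U with
  | empty => simp
  | cons a A' ha IH =>
    have hx : 0 ≤ t a := h0 a (mem_cons_self a A')
    have h0' : ∀ i ∈ A', 0 ≤ t i := fun i hi => h0 i (mem_cons.mpr (Or.inr hi))
    rw [sum_cons, card_cons] at hsum
    rw [prod_cons, card_cons]
    rcases Nat.eq_zero_or_pos A'.card with hm | hm
    · have hA' : A' = ∅ := card_eq_zero.mp hm
      subst hA'
      norm_num at hsum ⊢
      simp [hsum]
    · set m := A'.card with hmdef
      set U' : ℝ := (∑ i ∈ A', t i) / m with hU'def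
      have hm0 : (m:ℝ) ≠ 0 := Nat.cast_ne_zero.mpr hm.ne'
      have hU'0 : 0 ≤ U' := div_nonneg (Finset.sum_nonneg h0') (Nat.cast_nonneg m)
      have hsum' : ∑ i ∈ A', t i = m * U' := by
        rw [hU'def]; field_simp
      have IH' := IH h0' hU'0 hsum'
      have hta : t a = ((m:ℝ)+1) * U - m * U' := by
        rw [hsum'] at hsum; push_cast at hsum; linarith
      have step1 : t a * ∏ i ∈ A', t i ≤ t a * U' ^ m :=
        mul_le_mul_of_nonneg_left IH' hx
      have htp := tangent_pow (m+1) hU hU'0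
      have e1 : U' ^ (m+1) = U' ^ m * U' := pow_succ U' m
      have e2 : (m+1) - 1 = m := by omega
      rw [e1, e2] at htp
      have e3 : t a * U' ^ m = U' ^ m * U' + (↑(m+1)) * U' ^ m * (U - U') := by
        rw [hta]; push_cast; ring
      calc t a * ∏ i ∈ A', t i ≤ t a * U' ^ m := step1
        _ = U' ^ m * U' + (↑(m+1)) * U' ^ m * (U - U') := e3
        _ ≤ U ^ (m+1) := htp

lemma key_ineq {ι : Type*} [DecidableEq ι] (A : Finset ι) (t : ι → ℝ)
    (ht : ∀ i ∈ A, t i ∈ Set.Icc (0:ℝ) 1) {U : ℝ} (hU : U ∈ Set.Icc (0:ℝ) 1)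
    (hsum : ∑ i ∈ A, t i = A.card * U) :
    (∑ i ∈ A, ∏ j ∈ A.erase i, t j) - ((A.card:ℝ) - 2) * ∏ i ∈ A, t i
      ≤ (A.card:ℝ) * U ^ (A.card - 1) - ((A.card:ℝ) - 2) * U ^ A.card := by
  induction A using Finset.cons_induction generalizing U with
  | empty => simp
  | cons a A' ha IH =>
    have hta : t a ∈ Set.Icc (0:ℝ) 1 := ht a (mem_cons_self a A')
    have ht' : ∀ i ∈ A', t i ∈ Set.Icc (0:ℝ) 1 := fun i hi => ht i (mem_cons.mpr (Or.inr hi))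
    rw [sum_cons, card_cons] at hsum
    rw [card_cons, prod_cons]
    -- rewrite the erase-sum
    have esum : ∑ i ∈ cons a A' ha, ∏ j ∈ (cons a A' ha).erase i, t j
        = ∏ j ∈ A', t j + ∑ i ∈ A', (t a * ∏ j ∈ A'.erase i, t j) := by
      rw [sum_cons, erase_cons ha]
      congr 1
      apply Finset.sum_congr rfl
      intro i hi
      rw [erase_cons_of_ne ha (fun h => ha (h ▸ hi)), prod_cons]
    rw [esum]
    rcases Nat.eq_zero_or_pos A'.card with hm | hm
    · have hA' : A' = ∅ := card_eq_zero.mp hm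
      subst hA'
      norm_num at hsum ⊢
      rw [hsum]
    · obtain ⟨k, hk⟩ : ∃ k, A'.card = k + 1 := ⟨A'.card - 1, by omega⟩
      set m := A'.card with hmdef
      set U' : ℝ := (∑ i ∈ A', t i) / m with hU'def
      have hm0 : (m:ℝ) ≠ 0 := Nat.cast_ne_zero.mpr hm.ne'
      have hmR : (0:ℝ) < m := by exact_mod_cast hm
      have hU'0 : 0 ≤ U' := div_nonneg (Finset.sum_nonneg (fun i hi => (ht' i hi).1)) (Nat.cast_nonneg m)
      have hU'1 : U' ≤ 1 := by
        rw [hU'def, div_le_one hmR]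
        calc ∑ i ∈ A', t i ≤ ∑ i ∈ A', 1 := Finset.sum_le_sum (fun i hi => (ht' i hi).2)
          _ = m := by simp [hmdef]
      have hsum' : ∑ i ∈ A', t i = m * U' := by rw [hU'def]; field_simp
      have IH' := IH ht' ⟨hU'0, hU'1⟩ hsum'
      have hamgm := amgm A' t (fun i hi => (ht' i hi).1) hU'0 hsum'
      have hx0 : 0 ≤ t a := hta.1
      have hx1 : t a ≤ 1 := hta.2
      have htaeq : t a = ((m:ℝ)+1) * U - m * U' := by
        rw [hsum'] at hsum; push_cast at hsum; linarith
      have htan := tangent_main m hm hU ⟨hU'0, hU'1⟩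
      -- mul_sum
      rw [← Finset.mul_sum]
      set E : ℝ := ∑ i ∈ A', ∏ j ∈ A'.erase i, t j with hE
      set Pr : ℝ := ∏ i ∈ A', t i with hPr
      -- step A: algebraic regrouping
      have regroup : Pr + t a * E - ((↑(m+1):ℝ) - 2) * (t a * Pr)
          = t a * (E - ((m:ℝ)-2) * Pr) + (1 - t a) * Pr := by push_cast; ring
      have stepA : t a * (E - ((m:ℝ)-2) * Pr) ≤ t a * ((m:ℝ) * U'^(m-1) - ((m:ℝ)-2) * U'^m) :=
        mul_le_mul_of_nonneg_left IH' hx0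
      have stepB : (1 - t a) * Pr ≤ (1 - t a) * U'^m :=
        mul_le_mul_of_nonneg_left hamgm (by linarith)
      -- combine to the tangent form
      have combine : t a * ((m:ℝ) * U'^(m-1) - ((m:ℝ)-2) * U'^m) + (1 - t a) * U'^m
          = (((m:ℝ)+1) * U'^m - ((m:ℝ)-1) * U'^(m+1))
            + ((((m:ℝ)+1)*(m:ℝ)) * U'^(m-1) - (((m:ℝ)-1)*((m:ℝ)+1)) * U'^m) * (U - U') := by
        rw [htaeq]
        rw [hk]
        simp only [Nat.add_sub_cancel]
        push_cast
        ring
      have final : (↑(m+1):ℝ) * U ^ ((m+1) - 1) - ((↑(m+1):ℝ) - 2) * U ^ (m+1)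
          = ((m:ℝ)+1) * U^m - ((m:ℝ)-1) * U^(m+1) := by
        simp only [Nat.add_sub_cancel]
        push_cast
        ring
      rw [final]
      calc Pr + t a * E - ((↑(m+1):ℝ) - 2) * (t a * Pr)
          = t a * (E - ((m:ℝ)-2) * Pr) + (1 - t a) * Pr := regroup
        _ ≤ t a * ((m:ℝ) * U'^(m-1) - ((m:ℝ)-2) * U'^m) + (1 - t a) * U'^m := by
            linarith [stepA, stepB]
        _ = (((m:ℝ)+1) * U'^m - ((m:ℝ)-1) * U'^(m+1))
            + ((((m:ℝ)+1)*(m:ℝ)) * U'^(m-1) - (((m:ℝ)-1)*((m:ℝ)+1)) * U'^m) * (U - U') := combine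
        _ ≤ ((m:ℝ)+1) * U^m - ((m:ℝ)-1) * U^(m+1) := htan

theorem stmt_3 (n : ℕ) (hn : 0 < n) (s : Fin n → ℝ)
    (hs : ∀ i, s i ∈ Set.Icc (0:ℝ) 1) (S : ℝ) (hS : S = ∑ i, s i) :
    2 * (∏ i, (1 - s i)) +
        ∑ i, s i * ∏ j ∈ Finset.univ.erase i, (1 - s j)
      ≤ 2 * (1 - S / n) ^ n + S * (1 - S / n) ^ (n - 1) := by
  have hnR : (0:ℝ) < n := by exact_mod_cast hn
  set t : Fin n → ℝ := fun i => 1 - s i with htdef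
  set U : ℝ := 1 - S / n with hUdef
  have hS0 : 0 ≤ S := by
    rw [hS]; exact Finset.sum_nonneg (fun i _ => (hs i).1)
  have hSn : S ≤ n := by
    rw [hS]
    calc ∑ i, s i ≤ ∑ _i : Fin n, (1:ℝ) := Finset.sum_le_sum (fun i _ => (hs i).2)
      _ = n := by simp
  have hU : U ∈ Set.Icc (0:ℝ) 1 := by
    constructor
    · rw [hUdef]; rw [sub_nonneg, div_le_one hnR]; exact hSn
    · rw [hUdef]; have : 0 ≤ S / n := div_nonneg hS0 hnR.le; linarith
  have ht : ∀ i ∈ (univ : Finset (Fin n)), t i ∈ Set.Icc (0:ℝ) 1 := by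
    intro i _
    have := hs i
    constructor
    · simp only [htdef]; linarith [this.2]
    · simp only [htdef]; linarith [this.1]
  have hcard : (univ : Finset (Fin n)).card = n := by simp
  have hsum : ∑ i, t i = ((univ : Finset (Fin n)).card : ℝ) * U := by
    rw [hcard, hUdef]
    simp only [htdef]
    rw [Finset.sum_sub_distrib]
    simp only [sum_const, card_univ, Fintype.card_fin, nsmul_eq_mul, mul_one]
    rw [← hS]
    field_simp
  have hkey := key_ineq (univ : Finset (Fin n)) t ht hU hsum
  rw [hcard] at hkey
  -- rewrite sum: s i * prod-erase = prod-erase - full prod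
  have e1 : ∀ i : Fin n, s i * ∏ j ∈ univ.erase i, t j
      = ∏ j ∈ univ.erase i, t j - ∏ j, t j := by
    intro i
    have hmul : t i * ∏ j ∈ univ.erase i, t j = ∏ j, t j :=
      Finset.mul_prod_erase univ t (mem_univ i)
    have hsi : s i = 1 - t i := by simp [htdef]
    rw [hsi, sub_mul, one_mul, hmul]
  have e2 : ∑ i, s i * ∏ j ∈ univ.erase i, t j
      = (∑ i, ∏ j ∈ univ.erase i, t j) - n * ∏ j, t j := by
    calc ∑ i, s i * ∏ j ∈ univ.erase i, t j
        = ∑ i, ((∏ j ∈ univ.erase i, t j) - ∏ j, t j) :=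
          Finset.sum_congr rfl (fun i _ => e1 i)
      _ = (∑ i, ∏ j ∈ univ.erase i, t j) - n * ∏ j, t j := by
          rw [Finset.sum_sub_distrib]
          simp [card_univ, mul_comm]
  have e3 : U^n = U^(n-1)*U := by
    rw [← pow_succ]
    congr 1
    omega
  have hSU : S = (n:ℝ)*(1-U) := by
    rw [hUdef]
    field_simp
    ring
  have req : (n:ℝ)*U^(n-1) - ((n:ℝ)-2)*U^n = 2*U^n + S*U^(n-1) := by
    rw [hSU, e3]; ring
  rw [e2]
  linarith [hkey, req]
end

section
/- For every positive integer n and every x ≥ 0, the function y ↦ (1/y)(x + 1 - (1 - y/n)^n) is decreasing in y on (0,1]. -/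
theorem stmt_5 (n : ℕ) (hn : 0 < n) (x : ℝ) (hx : 0 ≤ x) :
    AntitoneOn (fun y : ℝ => (x + 1 - (1 - y / n) ^ n) / y) (Set.Ioc 0 1) := by
  have hn' : (1 : ℝ) ≤ n := by exact_mod_cast hn
  have hnpos : (0 : ℝ) < n := by positivity
  have key : ∀ y : ℝ, y ∈ Set.Ioc (0:ℝ) 1 →
      (x + 1 - (1 - y / n) ^ n) / y
        = x / y + (∑ k ∈ Finset.range n, (1 - y / n) ^ k) / n := by
    intro y hy
    have hy0 : y ≠ 0 := ne_of_gt hy.1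
    have hgeom : (1 - (1 - y / n)) * ∑ k ∈ Finset.range n, (1 - y / n) ^ k
        = 1 - (1 - y / n) ^ n := by
      have := geom_sum_mul (1 - y / n) n
      linarith [this]
    have h1 : 1 - (1 - y / n) ^ n = (y / n) * ∑ k ∈ Finset.range n, (1 - y / n) ^ k := by
      rw [← hgeom]; ring_nf
    have : x + 1 - (1 - y / n) ^ n
        = x + (y / n) * ∑ k ∈ Finset.range n, (1 - y / n) ^ k := by linarith
    rw [this]
    field_simp
  intro a ha b hb hab
  simp only
  rw [key a ha, key b hb]
  have h1 : x / b ≤ x / a := by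
    apply div_le_div_of_nonneg_left hx ha.1 hab
  have h2 : (∑ k ∈ Finset.range n, (1 - b / n) ^ k) / n
      ≤ (∑ k ∈ Finset.range n, (1 - a / n) ^ k) / n := by
    have hb0 : (0:ℝ) ≤ 1 - b / n := by
      have : b / n ≤ 1 := by rw [div_le_one hnpos]; exact le_trans hb.2 hn'
      linarith
    have hba : 1 - b / n ≤ 1 - a / n := by
      have : a / n ≤ b / n := by gcongr
      linarith
    gcongr
  linarith
end

section
/- For every positive integer n ≥ 2, the function y ↦ (1/y)(2 - r_n(y)) is decreasing in y on (0,1), where r_n(y) = 2(1 - y/n)^n + y(1 - y/n)^{n-1}. -/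
lemma key_aux (n : ℕ) (hn : 2 ≤ n) (t : ℝ) (ht0 : 0 ≤ t) (ht1 : t ≤ 1) :
    2*t^n + 2*n*(1-t)*t^(n-1) + n*(n-1)*(1-t)^2*t^(n-2) ≤ 2 := by
  have hs0 : (0:ℝ) ≤ 1 - t := by linarith
  have h1 : (1:ℝ) = ∑ k ∈ Finset.range (n+1), t^k * (1-t)^(n-k) * (n.choose k) := by
    rw [← add_pow]; norm_num
  have hsub : ({n-2, n-1, n} : Finset ℕ) ⊆ Finset.range (n+1) := by
    intro k hk; simp at hk; rcases hk with h|h|h <;> simp [h] <;> omega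
  have hle : ∑ k ∈ ({n-2, n-1, n} : Finset ℕ), t^k * (1-t)^(n-k) * (n.choose k)
      ≤ ∑ k ∈ Finset.range (n+1), t^k * (1-t)^(n-k) * (n.choose k) := by
    apply Finset.sum_le_sum_of_subset_of_nonneg hsub
    intro k _ _
    positivity
  have hne1 : n - 2 ≠ n - 1 := by omega
  have hne2 : n - 2 ≠ n := by omega
  have hne3 : n - 1 ≠ n := by omega
  rw [Finset.sum_insert (by simp [hne1, hne2]), Finset.sum_insert (by simp [hne3]),
    Finset.sum_singleton, ← h1] at hle
  have e1 : n - (n-1) = 1 := by omega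
  have e2 : n - (n-2) = 2 := by omega
  have c1 : (n.choose (n-1) : ℝ) = n := by
    have : n.choose (n-1) = n.choose 1 := by
      conv_lhs => rw [show n - 1 = n - 1 from rfl]
      rw [← Nat.choose_symm (by omega : 1 ≤ n)]
    rw [this, Nat.choose_one_right]
  have c2 : 2 * (n.choose (n-2) : ℝ) = n * (n-1) := by
    have h0 : n.choose (n-2) = n.choose 2 := by
      rw [← Nat.choose_symm (by omega : 2 ≤ n)]
    have h2 : 2 * n.choose 2 = n * (n-1) := by
      rw [Nat.choose_two_right]
      obtain ⟨c, hc⟩ := Nat.even_mul_succ_self (n-1)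
      rw [show n - 1 + 1 = n by omega] at hc
      have hc' : n * (n-1) = 2*c := by rw [mul_comm]; omega
      rw [hc']
      omega
    rw [h0]
    have := congrArg (Nat.cast (R := ℝ)) h2
    push_cast [Nat.cast_sub (by omega : 1 ≤ n)] at this
    linarith
  rw [e1, e2, c1, tsub_self, Nat.choose_self] at hle
  have c2t : 2 * (n.choose (n-2) : ℝ) * ((1-t)^2 * t^(n-2)) = n * (n-1) * ((1-t)^2*t^(n-2)) := by
    rw [c2]
  simp only [pow_one, pow_zero, Nat.cast_one, mul_one] at hle
  nlinarith [hle, c2t]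

theorem stmt_7 (n : ℕ) (hn : 2 ≤ n) :
    AntitoneOn
      (fun y : ℝ => (2 - (2 * (1 - y / n) ^ n + y * (1 - y / n) ^ (n - 1))) / y)
      (Set.Ioo 0 1) := by
  have hn0 : (n:ℝ) ≠ 0 := by positivity
  have hn1 : (1:ℝ) ≤ n := by exact_mod_cast Nat.one_le_of_lt hn
  have hder : ∀ y ∈ Set.Ioo (0:ℝ) 1,
      HasDerivAt (fun y : ℝ => (2 - (2 * (1 - y / n) ^ n + y * (1 - y / n) ^ (n - 1))) / y)
      ((-(2 * ((n:ℝ) * (1 - y/n) ^ (n-1) * (0 - 1/n)) + (1 * (1 - y/n) ^ (n-1)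
        + y * ((↑(n-1):ℝ) * (1 - y/n) ^ (n-1-1) * (0 - 1/n)))) * y
        - (2 - (2 * (1 - y / n) ^ n + y * (1 - y / n) ^ (n - 1))) * 1) / y ^ 2) y := by
    intro y hy
    have hy0 : y ≠ 0 := ne_of_gt hy.1
    have ht : HasDerivAt (fun y : ℝ => 1 - y / n) (0 - 1/n) y := by
      simpa using ((hasDerivAt_id y).div_const (n:ℝ)).const_sub 1
    exact ((((ht.pow n).const_mul 2).add ((hasDerivAt_id y).mul (ht.pow (n-1)))).const_sub 2).div
      (hasDerivAt_id y) hy0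
  apply antitoneOn_of_deriv_nonpos (convex_Ioo 0 1)
  · exact fun y hy => (hder y hy).continuousAt.continuousWithinAt
  · rw [interior_Ioo]
    exact fun y hy => (hder y hy).differentiableAt.differentiableWithinAt
  · rw [interior_Ioo]
    intro y hy
    rw [(hder y hy).deriv]
    set t : ℝ := 1 - y/n with htdef
    have ht0 : (0:ℝ) ≤ t := by
      have : y / n ≤ 1 := by
        rw [div_le_one (by positivity)]
        linarith [hy.2]
      simp only [htdef]; linarith
    have ht1 : t ≤ 1 := by
      have : 0 ≤ y / n := div_nonneg (le_of_lt hy.1) (by positivity)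
      simp only [htdef]; linarith
    have hkey := key_aux n hn t ht0 ht1
    have e0 : 1 - t = y / n := by simp [htdef]
    rw [e0] at hkey
    have e1' : (n:ℝ) * (y/n) * t^(n-1) = y * t^(n-1) := by field_simp
    have e2' : (n:ℝ) * ((n:ℝ)-1) * (y/n)^2 * t^(n-2) = y^2 * ((n:ℝ)-1)/n * t^(n-2) := by
      field_simp
    have h2 : 2*t^n + 2*y*t^(n-1) + y^2*((n:ℝ)-1)/n*t^(n-2) ≤ 2 := by
      nlinarith [hkey, e1', e2']
    apply div_nonpos_of_nonpos_of_nonneg _ (sq_nonneg y)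
    have cn1 : ((n-1:ℕ):ℝ) = (n:ℝ) - 1 := by
      push_cast [Nat.cast_sub (by omega : 1 ≤ n)]; ring
    rw [show n - 1 - 1 = n - 2 by omega, cn1]
    have heq : (-(2 * ((n:ℝ) * t ^ (n-1) * (0 - 1/n)) + (1 * t ^ (n-1)
        + y * (((n:ℝ)-1) * t ^ (n-2) * (0 - 1/n)))) * y
        - (2 - (2 * t ^ n + y * t ^ (n-1))) * 1)
        = 2*t^n + 2*y*t^(n-1) + y^2*((n:ℝ)-1)/n*t^(n-2) - 2 := by
      field_simp
      ring
    rw [heq]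
    linarith
end

section
/- For every positive integer H, the function f_H(x) = (H - e^{-x} ∑_{i=0}^{H-1} (H - i) x^i / i!)/x is decreasing in x on (0, ∞). -/
open Finset

theorem stmt_8 (H : ℕ) (hH : 0 < H) :
    AntitoneOn
      (fun x : ℝ =>
        ((H : ℝ) - Real.exp (-x) *
          ∑ i ∈ Finset.range H, ((H : ℝ) - i) * x ^ i / (Nat.factorial i)) / x)
      (Set.Ioi 0) := by
  obtain ⟨n, rfl⟩ := Nat.exists_eq_succ_of_ne_zero hH.ne'
  set g : ℝ → ℝ := fun x => (((n + 1 : ℕ)) : ℝ) - Real.exp (-x) *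
      ∑ i ∈ Finset.range (n + 1), (((n + 1 : ℕ) : ℝ) - i) * x ^ i / (Nat.factorial i) with hgdef
  set T : ℝ → ℝ := fun x => ∑ i ∈ Finset.range (n + 1), x ^ i / (Nat.factorial i) with hTdef
  -- key algebraic identity: S - S' = T
  have hkey : ∀ x : ℝ,
      (∑ i ∈ Finset.range (n + 1), (((n + 1 : ℕ) : ℝ) - i) * x ^ i / (Nat.factorial i)) -
        (∑ i ∈ Finset.range (n + 1),
          (((n + 1 : ℕ) : ℝ) - i) * (↑i * x ^ (i - 1)) / (Nat.factorial i)) = T x := by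
    intro x
    have h2 : (∑ i ∈ Finset.range (n + 1),
        (((n + 1 : ℕ) : ℝ) - i) * (↑i * x ^ (i - 1)) / (Nat.factorial i)) =
        ∑ j ∈ Finset.range n, ((n : ℝ) - j) * x ^ j / (Nat.factorial j) := by
      rw [Finset.sum_range_succ']
      simp only [Nat.cast_zero, mul_zero, zero_mul, mul_comm, Nat.cast_succ, zero_div, add_zero,
        Nat.factorial_zero, pow_zero]
      apply Finset.sum_congr rfl
      intro j _
      have hfac : ((Nat.factorial (j + 1) : ℝ)) = (j + 1) * Nat.factorial j := by
        rw [Nat.factorial_succ]; push_cast; ring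
      have hfj : (Nat.factorial j : ℝ) ≠ 0 := Nat.cast_ne_zero.2 (Nat.factorial_ne_zero j)
      have hj1 : ((j : ℝ) + 1) ≠ 0 := by positivity
      rw [hfac]
      push_cast
      field_simp
      ring
    have h1 : (∑ i ∈ Finset.range (n + 1), (((n + 1 : ℕ) : ℝ) - i) * x ^ i / (Nat.factorial i)) =
        (∑ j ∈ Finset.range n, ((n : ℝ) - j) * x ^ j / (Nat.factorial j)) + T x := by
      have : ∀ i ∈ Finset.range (n + 1),
          (((n + 1 : ℕ) : ℝ) - i) * x ^ i / (Nat.factorial i) =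
            ((n : ℝ) - i) * x ^ i / (Nat.factorial i) + x ^ i / (Nat.factorial i) := by
        intro i _
        push_cast
        ring
      rw [Finset.sum_congr rfl this, Finset.sum_add_distrib]
      congr 1
      rw [Finset.sum_range_succ]
      simp
    rw [h1, h2]
    ring
  -- derivative of g
  have hg : ∀ x : ℝ, HasDerivAt g (Real.exp (-x) * T x) x := by
    intro x
    have hE : HasDerivAt (fun x : ℝ => Real.exp (-x)) (-Real.exp (-x)) x := by
      have h := (Real.hasDerivAt_exp (-x)).comp x (hasDerivAt_neg x)
      simp only [mul_neg, mul_one] at h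
      exact h
    have hS : HasDerivAt
        (fun x : ℝ => ∑ i ∈ Finset.range (n + 1),
          (((n + 1 : ℕ) : ℝ) - i) * x ^ i / (Nat.factorial i))
        (∑ i ∈ Finset.range (n + 1),
          (((n + 1 : ℕ) : ℝ) - i) * (↑i * x ^ (i - 1)) / (Nat.factorial i)) x := by
      apply HasDerivAt.fun_sum
      intro i _
      exact ((hasDerivAt_pow i x).const_mul (((n + 1 : ℕ) : ℝ) - i)).div_const _
    have := (hE.mul hS).const_sub (((n + 1 : ℕ)) : ℝ)
    exact this.congr_deriv (by rw [← hkey x]; ring)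
  -- derivative of T
  have hT : ∀ x : ℝ, HasDerivAt T (T x - x ^ n / Nat.factorial n) x := by
    intro x
    have hT' : HasDerivAt T
        (∑ i ∈ Finset.range (n + 1), (↑i * x ^ (i - 1)) / (Nat.factorial i)) x := by
      apply HasDerivAt.fun_sum
      intro i _
      exact (hasDerivAt_pow i x).div_const _
    convert hT' using 1
    have h2 : (∑ i ∈ Finset.range (n + 1), (↑i * x ^ (i - 1)) / (Nat.factorial i)) =
        ∑ j ∈ Finset.range n, x ^ j / (Nat.factorial j) := by
      rw [Finset.sum_range_succ']
      simp only [Nat.cast_zero, zero_mul, zero_div, add_zero]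
      apply Finset.sum_congr rfl
      intro j _
      have hfac : ((Nat.factorial (j + 1) : ℝ)) = (j + 1) * Nat.factorial j := by
        rw [Nat.factorial_succ]; push_cast; ring
      have hfj : (Nat.factorial j : ℝ) ≠ 0 := Nat.cast_ne_zero.2 (Nat.factorial_ne_zero j)
      have hj1 : ((j : ℝ) + 1) ≠ 0 := by positivity
      rw [hfac]
      push_cast
      field_simp
    rw [h2]
    show (∑ i ∈ Finset.range (n + 1), x ^ i / (Nat.factorial i : ℝ)) - x ^ n / Nat.factorial n = _
    rw [Finset.sum_range_succ]
    ring
  -- g' = exp(-x) T x is antitone on Ici 0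
  have hphi : ∀ x : ℝ, HasDerivAt (fun x => Real.exp (-x) * T x)
      (-(Real.exp (-x) * (x ^ n / Nat.factorial n))) x := by
    intro x
    have hE : HasDerivAt (fun x : ℝ => Real.exp (-x)) (-Real.exp (-x)) x := by
      have h := (Real.hasDerivAt_exp (-x)).comp x (hasDerivAt_neg x)
      simp only [mul_neg, mul_one] at h
      exact h
    have := hE.mul (hT x)
    exact this.congr_deriv (by ring)
  have hanti : AntitoneOn (fun x => Real.exp (-x) * T x) (Set.Ici (0 : ℝ)) := by
    apply antitoneOn_of_deriv_nonpos (convex_Ici 0)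
    · exact fun x _ => ((hphi x).continuousAt).continuousWithinAt
    · exact fun x _ => (hphi x).differentiableAt.differentiableWithinAt
    · intro x hx
      rw [interior_Ici] at hx
      rw [(hphi x).deriv]
      have hx0 : (0 : ℝ) < x := hx
      have : (0 : ℝ) ≤ Real.exp (-x) * (x ^ n / Nat.factorial n) := by positivity
      linarith
  -- g is concave on Ici 0
  have hconc : ConcaveOn ℝ (Set.Ici (0 : ℝ)) g := by
    apply AntitoneOn.concaveOn_of_deriv (convex_Ici 0)
    · exact fun x _ => (hg x).continuousAt.continuousWithinAt
    · exact fun x _ => (hg x).differentiableAt.differentiableWithinAt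
    · intro a ha b hb hab
      rw [interior_Ici] at ha hb
      rw [(hg a).deriv, (hg b).deriv]
      exact hanti (Set.mem_Ici.2 (le_of_lt (Set.mem_Ioi.1 ha))) (Set.mem_Ici.2 (le_of_lt (Set.mem_Ioi.1 hb))) hab
  have hg0 : g 0 = 0 := by
    rw [hgdef]
    simp only [neg_zero, Real.exp_zero, one_mul]
    rw [Finset.sum_eq_single_of_mem 0 (Finset.mem_range.2 (Nat.succ_pos n))]
    · simp
    · intro i _ hi
      simp [zero_pow hi]
  -- conclude
  intro a ha b hb hab
  simp only [Set.mem_Ioi] at ha hb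
  show g b / b ≤ g a / a
  rcases eq_or_lt_of_le hab with rfl | hlt
  · exact le_rfl
  have ht0 : (0 : ℝ) ≤ a / b := by positivity
  have ht1 : 0 ≤ 1 - a / b := by
    have : a / b ≤ 1 := (div_le_one hb).2 hab
    linarith
  have hcomb := hconc.2 (Set.self_mem_Ici) (Set.mem_Ici.2 hb.le) ht1 ht0 (by ring)
  rw [hg0] at hcomb
  have hab' : (1 - a / b) • (0 : ℝ) + (a / b) • b = a := by
    simp only [smul_eq_mul, mul_zero, zero_add]
    field_simp
  rw [hab'] at hcomb
  simp only [smul_eq_mul, mul_zero, zero_add] at hcomb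
  rw [div_le_div_iff₀ hb ha]
  have heq : a / b * g b * b = g b * a := by field_simp
  have h3 : a / b * g b * b ≤ g a * b := mul_le_mul_of_nonneg_right hcomb hb.le
  rw [heq] at h3
  exact h3
end

section
/- For every positive integer H and every x > 0, e^{-x} ∑_{i=0}^{H-1} (x^i/i!)(H - i)(x + 1 - i) ≤ H. -/
open Finset

theorem stmt_9 (H : ℕ) (hH : 0 < H) (x : ℝ) (hx : 0 < x) :
    Real.exp (-x) *
      ∑ i ∈ Finset.range H, (x ^ i / (Nat.factorial i)) * ((H : ℝ) - i) * (x + 1 - i)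
      ≤ (H : ℝ) := by
  set a : ℕ → ℝ := fun i => x ^ i / (Nat.factorial i) with ha
  set g : ℕ → ℝ := fun i => (i : ℝ) * ((H : ℝ) + 1 - i) * a i with hg
  have hstep : ∀ i : ℕ, x * a i = ((i : ℝ) + 1) * a (i + 1) := by
    intro i
    have hfac : (Nat.factorial (i + 1) : ℝ) = ((i : ℝ) + 1) * (Nat.factorial i) := by
      push_cast [Nat.factorial_succ]; ring
    have h0 : (Nat.factorial i : ℝ) ≠ 0 := by positivity
    have h1 : ((i : ℝ) + 1) ≠ 0 := by positivity
    simp only [ha, hfac, pow_succ]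
    field_simp
  have hkey : ∀ i : ℕ, a i * ((H : ℝ) - i) * (x + 1 - i) = (H : ℝ) * a i + (g (i + 1) - g i) := by
    intro i
    have h1 : g (i + 1) = ((i : ℝ) + 1) * ((H : ℝ) - i) * a (i + 1) := by
      simp only [hg]; push_cast; ring
    have h2 : ((i : ℝ) + 1) * ((H : ℝ) - i) * a (i + 1) = ((H : ℝ) - i) * (x * a i) := by
      rw [hstep i]; ring
    rw [h1, h2]; simp only [hg]; ring
  have hsum : ∑ i ∈ Finset.range H, a i * ((H : ℝ) - i) * (x + 1 - i)
      = (H : ℝ) * ∑ i ∈ Finset.range (H + 1), a i := by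
    have := Finset.sum_congr (rfl : Finset.range H = Finset.range H) (fun i _ => hkey i)
    rw [this, Finset.sum_add_distrib, Finset.sum_range_sub g, Finset.sum_range_succ,
      ← Finset.mul_sum]
    have hg0 : g 0 = 0 := by simp [hg]
    have hgH : g H = (H : ℝ) * a H := by simp only [hg]; ring
    rw [hg0, hgH]; ring
  rw [hsum]
  have hle : ∑ i ∈ Finset.range (H + 1), a i ≤ Real.exp x :=
    Real.sum_le_exp_of_nonneg hx.le _
  have hpos : (0 : ℝ) < Real.exp (-x) := Real.exp_pos _
  calc Real.exp (-x) * ((H : ℝ) * ∑ i ∈ Finset.range (H + 1), a i)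
      ≤ Real.exp (-x) * ((H : ℝ) * Real.exp x) := by
        apply mul_le_mul_of_nonneg_left _ hpos.le
        exact mul_le_mul_of_nonneg_left hle (Nat.cast_nonneg H)
    _ = (H : ℝ) := by
        rw [show Real.exp (-x) * ((H : ℝ) * Real.exp x) = (H : ℝ) * (Real.exp (-x) * Real.exp x) by ring,
          ← Real.exp_add]; simp
end

section
/- Let s_1, ..., s_n ∈ [0,1] with fixed sum s, let z_i be independent Bernoulli(s_i) variables with sum y, and let H be a positive integer. Then ∑_{i=0}^{H-1} (H-i)·P[y = i] ≤ ∑_{i=0}^{H-1} (H-i)·C(n,i)·(s/n)^i·(1 - s/n)^{n-i}; i.e., the polynomial ∑_{i=0}^{H-1}(H-i)·e_i-type expression is maximized when all s_i are equal. -/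
open Finset

namespace Stmt13

variable {α : Type*} [DecidableEq α]

noncomputable def Fg (g : ℕ → ℝ) (p : α → ℝ) (s : Finset α) : ℝ :=
  ∑ T ∈ s.powerset, (∏ j ∈ T, p j) * (∏ j ∈ s \ T, (1 - p j)) * g T.card

lemma Fg_congr {g : ℕ → ℝ} {p q : α → ℝ} {s : Finset α} (h : ∀ k ∈ s, p k = q k) :
    Fg g p s = Fg g q s := by
  refine Finset.sum_congr rfl fun T hT => ?_
  rw [mem_powerset] at hT
  have h1 : ∏ j ∈ T, p j = ∏ j ∈ T, q j :=
    Finset.prod_congr rfl fun j hj => h j (hT hj)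
  have h2 : ∏ j ∈ s \ T, (1 - p j) = ∏ j ∈ s \ T, (1 - q j) :=
    Finset.prod_congr rfl fun j hj => by rw [h j (mem_sdiff.1 hj).1]
  rw [h1, h2]

lemma Fg_insert {g : ℕ → ℝ} {p : α → ℝ} {s : Finset α} {i : α} (hi : i ∉ s) :
    Fg g p (insert i s) =
      (1 - p i) * Fg g p s + p i * Fg (fun k => g (k + 1)) p s := by
  rw [Fg, Finset.sum_powerset_insert hi, Fg, Fg, Finset.mul_sum, Finset.mul_sum]
  congr 1
  · refine Finset.sum_congr rfl fun T hT => ?_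
    rw [mem_powerset] at hT
    have hiT : i ∉ s \ T := fun h => hi (mem_sdiff.1 h).1
    rw [insert_sdiff_of_notMem _ (fun h : i ∈ T => hi (hT h)),
      Finset.prod_insert hiT]
    ring
  · refine Finset.sum_congr rfl fun T hT => ?_
    rw [mem_powerset] at hT
    have hiT : i ∉ T := fun h => hi (hT h)
    have hins : (insert i s) \ insert i T = s \ T := by
      ext k; simp only [mem_sdiff, mem_insert]
      constructor
      · rintro ⟨h1 | h1, h2⟩
        · exact (h2 (Or.inl h1)).elim
        · exact ⟨h1, fun hk => h2 (Or.inr hk)⟩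
      · rintro ⟨h1, h2⟩
        exact ⟨Or.inr h1, fun hk => hk.elim (fun e => hi (e ▸ h1)) h2⟩
    rw [Finset.prod_insert hiT, hins, Finset.card_insert_of_notMem hiT]
    ring

lemma Fg_nonneg {g : ℕ → ℝ} {p : α → ℝ} {s : Finset α}
    (hp : ∀ k ∈ s, p k ∈ Set.Icc (0:ℝ) 1) (hg : ∀ m, 0 ≤ g m) :
    0 ≤ Fg g p s := by
  refine Finset.sum_nonneg fun T hT => ?_
  rw [mem_powerset] at hT
  refine mul_nonneg (mul_nonneg (Finset.prod_nonneg fun j hj => (hp j (hT hj)).1)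
    (Finset.prod_nonneg fun j hj => ?_)) (hg _)
  have := (hp j (mem_sdiff.1 hj).1).2
  linarith

lemma Fg_comb {g0 g1 g2 : ℕ → ℝ} {p : α → ℝ} {s : Finset α} :
    Fg g0 p s + Fg g2 p s - 2 * Fg g1 p s
      = Fg (fun k => g0 k + g2 k - 2 * g1 k) p s := by
  simp only [Fg, ← Finset.sum_add_distrib, Finset.mul_sum, ← Finset.sum_sub_distrib]
  exact Finset.sum_congr rfl fun T _ => by ring

end Stmt13

namespace Stmt13

variable {α : Type*} [DecidableEq α]

noncomputable def gH (H : ℕ) (k : ℕ) : ℝ := max ((H : ℝ) - k) 0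

lemma gH_nonneg (H k : ℕ) : 0 ≤ gH H k := le_max_right _ _

lemma gH_convex (H k : ℕ) : 0 ≤ gH H k + gH H (k + 2) - 2 * gH H (k + 1) := by
  unfold gH
  rcases le_or_gt H (k + 1) with h | h
  · rcases le_or_gt H k with h0 | h0
    · have hk0 : (H:ℝ) ≤ k := by exact_mod_cast h0
      have e0 : max ((H : ℝ) - k) 0 = 0 := max_eq_right (by linarith)
      have e1 : max ((H : ℝ) - (k+1)) 0 = 0 := max_eq_right (by
        have : (H:ℝ) ≤ k := by exact_mod_cast h0
        push_cast; linarith)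
      have e2 : max ((H : ℝ) - (k+2)) 0 = 0 := max_eq_right (by
        have : (H:ℝ) ≤ k := by exact_mod_cast h0
        push_cast; linarith)
      push_cast
      rw [e0] at *
      push_cast at e1 e2 ⊢
      rw [e1, e2]; ring_nf; rfl
    · -- H = k + 1
      have hk : H = k + 1 := le_antisymm h h0
      subst hk
      have e0 : max ((k + 1 : ℝ) - k) 0 = 1 := by rw [max_eq_left] <;> norm_num
      have e1 : max (((k+1) : ℝ) - ((k:ℝ)+1)) 0 = 0 := by rw [max_eq_right] <;> norm_num
      have e2 : max (((k+1) : ℝ) - ((k:ℝ)+2)) 0 = 0 := max_eq_right (by norm_num)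
      push_cast
      rw [e0, e1, e2]; norm_num
  · -- k + 2 ≤ H : all linear
    have h2 : (k:ℝ) + 2 ≤ H := by exact_mod_cast h
    have e0 : max ((H : ℝ) - k) 0 = (H:ℝ) - k := max_eq_left (by linarith)
    have e1 : max ((H : ℝ) - ((k:ℝ)+1)) 0 = (H:ℝ) - ((k:ℝ)+1) := max_eq_left (by linarith)
    have e2 : max ((H : ℝ) - ((k:ℝ)+2)) 0 = (H:ℝ) - ((k:ℝ)+2) := max_eq_left (by linarith)
    push_cast
    rw [e0, e1, e2]; ring_nf; rfl

/-- Smoothing step: replacing the values at `i, j` by values with the same sum and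
larger product does not decrease `Fg (gH H)`. -/
lemma smoothing {H : ℕ} {p q : α → ℝ} {s : Finset α} {i j : α}
    (hi : i ∉ s) (hj : j ∉ s) (hij : i ≠ j)
    (hps : ∀ k ∈ s, p k ∈ Set.Icc (0:ℝ) 1)
    (hagree : ∀ k ∈ s, p k = q k)
    (hsum : q i + q j = p i + p j) (hprod : p i * p j ≤ q i * q j) :
    Fg (gH H) p (insert i (insert j s)) ≤ Fg (gH H) q (insert i (insert j s)) := by
  have hi' : i ∉ insert j s := by simp [hij, hi]
  have expand : ∀ r : α → ℝ,
      Fg (gH H) r (insert i (insert j s)) =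
        (1 - r i) * ((1 - r j) * Fg (gH H) r s + r j * Fg (fun k => gH H (k+1)) r s)
        + r i * ((1 - r j) * Fg (fun k => gH H (k+1)) r s
            + r j * Fg (fun k => gH H (k+2)) r s) := by
    intro r
    rw [Fg_insert hi', Fg_insert hj, Fg_insert hj]
  rw [expand p, expand q,
    Fg_congr (g := gH H) hagree,
    Fg_congr (g := fun k => gH H (k+1)) hagree,
    Fg_congr (g := fun k => gH H (k+2)) hagree]
  set A := Fg (gH H) q s with hA
  set B := Fg (fun k => gH H (k+1)) q s with hB
  set C := Fg (fun k => gH H (k+2)) q s with hC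
  have key : 0 ≤ A + C - 2 * B := by
    rw [hA, hB, hC, Fg_comb]
    refine Fg_nonneg (fun k hk => ?_) (fun m => gH_convex H m)
    rw [← hagree k hk]; exact hps k hk
  have iden : (1 - q i) * ((1 - q j) * A + q j * B) + q i * ((1 - q j) * B + q j * C)
      - ((1 - p i) * ((1 - p j) * A + p j * B) + p i * ((1 - p j) * B + p j * C))
      = (q i * q j - p i * p j) * (A + C - 2 * B) := by
    linear_combination (B - A) * hsum
  have := mul_nonneg (sub_nonneg.2 hprod) key
  linarith

end Stmt13

namespace Stmt13

lemma equalize {n H : ℕ} (hn : 0 < n) (S : ℝ) :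
    ∀ m (p : Fin n → ℝ), ((univ : Finset (Fin n)).filter fun i => p i ≠ S / n).card ≤ m →
      (∀ i, p i ∈ Set.Icc (0:ℝ) 1) → (∑ i, p i = S) →
      Fg (gH H) p univ ≤ Fg (gH H) (fun _ : Fin n => S / n) univ := by
  intro m
  induction m with
  | zero =>
    intro p hcard _ _
    refine le_of_eq (Fg_congr fun k _ => ?_)
    by_contra hne
    have : k ∈ (univ : Finset (Fin n)).filter fun i => p i ≠ S / n := by
      simp [hne]
    have := Finset.card_pos.2 ⟨k, this⟩
    omega
  | succ m ih =>
    intro p hcard hp hsum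
    by_cases hall : ∀ k, p k = S / n
    · exact le_of_eq (Fg_congr fun k _ => hall k)
    push_neg at hall
    obtain ⟨i₀, hi₀⟩ := hall
    -- find i with p i < S/n and j with p j > S/n
    have hSn : (n : ℝ) ≠ 0 := Nat.cast_ne_zero.2 hn.ne'
    have hconst : ∑ _i : Fin n, S / n = S := by
      rw [Finset.sum_const, card_univ, Fintype.card_fin, nsmul_eq_mul]
      field_simp
    have hex : (∃ i, p i < S / n) ∧ (∃ j, S / n < p j) := by
      constructor
      · by_contra hno
        push_neg at hno
        rcases lt_or_eq_of_le (hno i₀) with h | h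
        · have : ∑ i, S / n < ∑ i, p i :=
            Finset.sum_lt_sum (fun k _ => hno k) ⟨i₀, mem_univ _, h⟩
          rw [hconst, hsum] at this; exact lt_irrefl _ this
        · exact hi₀ h.symm
      · by_contra hno
        push_neg at hno
        rcases lt_or_eq_of_le (hno i₀) with h | h
        · have : ∑ i, p i < ∑ i, S / n :=
            Finset.sum_lt_sum (fun k _ => hno k) ⟨i₀, mem_univ _, h⟩
          rw [hconst, hsum] at this; exact lt_irrefl _ this
        · exact hi₀ h
    obtain ⟨⟨i, hilt⟩, ⟨j, hjgt⟩⟩ := hex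
    have hij : i ≠ j := fun h => by rw [h] at hilt; linarith
    set q : Fin n → ℝ := Function.update (Function.update p i (S / n)) j (p i + p j - S / n)
      with hq
    have hqi : q i = S / n := by
      rw [hq, Function.update_of_ne hij, Function.update_self]
    have hqj : q j = p i + p j - S / n := by rw [hq, Function.update_self]
    have hqk : ∀ k, k ≠ i → k ≠ j → q k = p k := fun k hki hkj => by
      rw [hq, Function.update_of_ne hkj, Function.update_of_ne hki]
    have hS0 : 0 ≤ S / n := by
      rw [← hsum]
      exact div_nonneg (Finset.sum_nonneg fun k _ => (hp k).1) (Nat.cast_nonneg n)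
    have hS1 : S / n ≤ 1 := by
      rw [div_le_one (by positivity)]
      calc S = ∑ i, p i := hsum.symm
      _ ≤ ∑ _i : Fin n, (1:ℝ) := Finset.sum_le_sum fun k _ => (hp k).2
      _ = n := by simp
    have hq01 : ∀ k, q k ∈ Set.Icc (0:ℝ) 1 := by
      intro k
      by_cases hki : k = i
      · rw [hki, hqi]; exact ⟨hS0, hS1⟩
      by_cases hkj : k = j
      · rw [hkj, hqj]
        constructor
        · have := (hp j).1; have := (hp i).1; linarith
        · have := (hp j).2; linarith
      · rw [hqk k hki hkj]; exact hp k
    have hqsum : ∑ k, q k = S := by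
      have h1 : ∑ k, q k = (p i + p j - S / n) + ∑ k ∈ univ \ {j}, Function.update p i (S/n) k := by
        rw [hq, Finset.sum_update_of_mem (mem_univ j)]
      have h2 : ∑ k ∈ univ \ {j}, Function.update p i (S/n) k
          = S / n + ∑ k ∈ (univ \ {j}) \ {i}, p k := by
        rw [Finset.sum_update_of_mem (by simp [hij])]
      have h3 : ∑ k ∈ (univ \ {j}) \ {i}, p k = S - p i - p j := by
        have e1 : ∑ k, p k = p j + ∑ k ∈ univ \ {j}, p k := by
          rw [← Finset.sum_eq_add_sum_sdiff_singleton_of_mem (mem_univ j)]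
        have e2 : ∑ k ∈ univ \ {j}, p k = p i + ∑ k ∈ (univ \ {j}) \ {i}, p k := by
          rw [← Finset.sum_eq_add_sum_sdiff_singleton_of_mem (by simp [hij] : i ∈ univ \ {j})]
        rw [hsum] at e1; linarith
      rw [h1, h2, h3]; ring
    have hfilter : ((univ : Finset (Fin n)).filter fun k => q k ≠ S / n)
        ⊆ ((univ : Finset (Fin n)).filter fun k => p k ≠ S / n).erase i := by
      intro k hk
      rw [mem_filter] at hk
      rw [mem_erase, mem_filter]
      by_cases hki : k = i
      · rw [hki, hqi] at hk; exact absurd rfl hk.2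
      by_cases hkj : k = j
      · refine ⟨hki, mem_univ _, ?_⟩
        rw [hkj]; intro h; rw [h] at hjgt; linarith
      · rw [hqk k hki hkj] at hk; exact ⟨hki, mem_univ _, hk.2⟩
    have hmemi : i ∈ (univ : Finset (Fin n)).filter fun k => p k ≠ S / n := by
      simp only [mem_filter, mem_univ, true_and]
      intro h; rw [h] at hilt; linarith
    have hcard' : ((univ : Finset (Fin n)).filter fun k => q k ≠ S / n).card ≤ m := by
      have := Finset.card_le_card hfilter
      have := Finset.card_erase_of_mem hmemi
      have := Finset.card_pos.2 ⟨i, hmemi⟩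
      omega
    -- smoothing step
    have hstep : Fg (gH H) p univ ≤ Fg (gH H) q univ := by
      have huniv : insert i (insert j ((univ : Finset (Fin n)) \ {i, j})) = univ := by
        ext k
        simp only [mem_insert, mem_sdiff, mem_univ, true_and, Finset.mem_insert,
          Finset.mem_singleton]
        constructor
        · intro _; trivial
        · intro _
          by_cases hki : k = i
          · exact Or.inl hki
          by_cases hkj : k = j
          · exact Or.inr (Or.inl hkj)
          · exact Or.inr (Or.inr (by tauto))
      rw [← huniv]
      refine smoothing (by simp) (by simp) hij (fun k hk => hp k) (fun k hk => ?_) ?_ ?_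
      · rw [mem_sdiff, Finset.mem_insert, Finset.mem_singleton] at hk
        push_neg at hk
        exact (hqk k hk.2.1 hk.2.2).symm
      · rw [hqi, hqj]; ring
      · rw [hqi, hqj]
        nlinarith [mul_nonneg (sub_nonneg.2 hilt.le) (sub_nonneg.2 hjgt.le)]
    exact hstep.trans (ih q hcard' hq01 hqsum)

end Stmt13

namespace Stmt13

noncomputable def Wk {n : ℕ} (p : Fin n → ℝ) (k : ℕ) : ℝ :=
  ∑ T ∈ Finset.powersetCard k (univ : Finset (Fin n)),
    (∏ j ∈ T, p j) * ∏ j ∈ univ \ T, (1 - p j)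

lemma Fg_eq_sum_range {n H : ℕ} (hHn : H ≤ n) (p : Fin n → ℝ) :
    Fg (gH H) p univ = ∑ k ∈ Finset.range H, ((H : ℝ) - k) * Wk p k := by
  have h1 : Fg (gH H) p univ
      = ∑ k ∈ Finset.range (n + 1),
          ∑ T ∈ (univ : Finset (Fin n)).powerset.filter (fun T => T.card = k),
            (∏ j ∈ T, p j) * (∏ j ∈ univ \ T, (1 - p j)) * gH H T.card := by
    rw [Fg]
    refine (Finset.sum_fiberwise_of_maps_to (fun T hT => ?_) _).symm
    rw [mem_range, Nat.lt_succ_iff]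
    rw [mem_powerset] at hT
    simpa using Finset.card_le_card hT
  rw [h1]
  have h2 : ∀ k, ∑ T ∈ (univ : Finset (Fin n)).powerset.filter (fun T => T.card = k),
      (∏ j ∈ T, p j) * (∏ j ∈ univ \ T, (1 - p j)) * gH H T.card
      = gH H k * Wk p k := by
    intro k
    rw [Wk, Finset.mul_sum, ← Finset.powersetCard_eq_filter]
    refine Finset.sum_congr rfl fun T hT => ?_
    rw [(Finset.mem_powersetCard.1 hT).2]
    ring
  simp only [h2]
  rw [← Finset.sum_subset (Finset.range_subset_range.2 (by omega) : Finset.range H ⊆ Finset.range (n+1))]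
  · refine Finset.sum_congr rfl fun k hk => ?_
    rw [mem_range] at hk
    have : gH H k = (H : ℝ) - k := max_eq_left (by
      have : (k:ℝ) < H := by exact_mod_cast hk
      linarith)
    rw [this]
  · intro k _ hk
    rw [mem_range, not_lt] at hk
    have : gH H k = 0 := max_eq_right (by
      have : (H:ℝ) ≤ k := by exact_mod_cast hk
      linarith)
    rw [this, zero_mul]

lemma Fg_const {n H : ℕ} (hHn : H ≤ n) (q : ℝ) :
    Fg (gH H) (fun _ : Fin n => q) univ
      = ∑ k ∈ Finset.range H, ((H : ℝ) - k) * (n.choose k) * q ^ k * (1 - q) ^ (n - k) := by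
  have h1 : Fg (gH H) (fun _ : Fin n => q) univ
      = ∑ T ∈ (univ : Finset (Fin n)).powerset,
          (fun m => q ^ m * (1 - q) ^ (n - m) * gH H m) T.card := by
    refine Finset.sum_congr rfl fun T hT => ?_
    rw [mem_powerset] at hT
    rw [Finset.prod_const, Finset.prod_const, Finset.card_sdiff_of_subset hT, card_univ, Fintype.card_fin]
  rw [h1, Finset.sum_powerset_apply_card (fun m => q ^ m * (1 - q) ^ (n - m) * gH H m),
    card_univ, Fintype.card_fin]
  rw [← Finset.sum_subset (Finset.range_subset_range.2 (by omega) : Finset.range H ⊆ Finset.range (n+1))]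
  · refine Finset.sum_congr rfl fun k hk => ?_
    rw [mem_range] at hk
    have hg : gH H k = (H : ℝ) - k := max_eq_left (by
      have : (k:ℝ) < H := by exact_mod_cast hk
      linarith)
    rw [hg, nsmul_eq_mul]
    ring
  · intro k _ hk
    rw [mem_range, not_lt] at hk
    have hg : gH H k = 0 := max_eq_right (by
      have : (H:ℝ) ≤ k := by exact_mod_cast hk
      linarith)
    rw [hg, mul_zero, smul_zero]

end Stmt13

namespace Stmt13

open MeasureTheory ProbabilityTheory

variable {Ω : Type*} [MeasurableSpace Ω] {μ : Measure Ω} [IsProbabilityMeasure μ]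

lemma prob_eq_Wk {n : ℕ} (z : Fin n → Ω → ℕ) (s : Fin n → ℝ)
    (hmeas : ∀ i, Measurable (z i))
    (hind : iIndepFun z μ)
    (hval : ∀ i ω, z i ω = 0 ∨ z i ω = 1)
    (hs : ∀ i, (μ {ω | z i ω = 1}).toReal = s i) (k : ℕ) :
    (μ {ω | (∑ j, z j ω) = k}).toReal = Wk s k := by
  classical
  set E : Finset (Fin n) → Set Ω :=
    fun T => ⋂ j, z j ⁻¹' {if j ∈ T then 1 else 0} with hE
  have hmeasE : ∀ T, MeasurableSet (E T) :=
    fun T => MeasurableSet.iInter fun j => (hmeas j) (measurableSet_singleton _)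
  have hsum_card : ∀ ω, (∑ j, z j ω) = ((univ : Finset (Fin n)).filter fun j => z j ω = 1).card := by
    intro ω
    rw [Finset.card_filter]
    refine Finset.sum_congr rfl fun j _ => ?_
    rcases hval j ω with h | h <;> simp [h]
  have hev : {ω | (∑ j, z j ω) = k} = ⋃ T ∈ Finset.powersetCard k (univ : Finset (Fin n)), E T := by
    ext ω
    simp only [Set.mem_setOf_eq, Set.mem_iUnion, hE, Set.mem_iInter, Set.mem_preimage,
      Set.mem_singleton_iff]
    constructor
    · intro h
      refine ⟨(univ : Finset (Fin n)).filter fun j => z j ω = 1,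
        Finset.mem_powersetCard.2 ⟨Finset.subset_univ _, by rw [← hsum_card ω, h]⟩, fun j => ?_⟩
      rcases hval j ω with h0 | h1
      · rw [if_neg (by simp [h0]), h0]
      · rw [if_pos (by simp [h1]), h1]
    · rintro ⟨T, hT, hωT⟩
      have : ∀ j, z j ω = if j ∈ T then 1 else 0 := hωT
      calc (∑ j, z j ω) = ∑ j, if j ∈ T then 1 else 0 := Finset.sum_congr rfl fun j _ => this j
      _ = T.card := by
          rw [Finset.sum_ite_mem, Finset.univ_inter, Finset.sum_const, smul_eq_mul, mul_one]
      _ = k := (Finset.mem_powersetCard.1 hT).2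
  have hdisj : (↑(Finset.powersetCard k (univ : Finset (Fin n))) : Set (Finset (Fin n))).PairwiseDisjoint E := by
    intro T _ T' _ hTT'
    refine Set.disjoint_left.2 fun ω hω hω' => hTT' ?_
    simp only [hE, Set.mem_iInter, Set.mem_preimage, Set.mem_singleton_iff] at hω hω'
    ext j
    constructor
    · intro hj
      by_contra hj'
      have := hω j; have := hω' j
      rw [if_pos hj] at *; rw [if_neg hj'] at *; omega
    · intro hj
      by_contra hj'
      have := hω j; have := hω' j
      rw [if_pos hj] at *; rw [if_neg hj'] at *; omega
  have hmeasure : μ {ω | (∑ j, z j ω) = k}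
      = ∑ T ∈ Finset.powersetCard k (univ : Finset (Fin n)), μ (E T) := by
    rw [hev, measure_biUnion_finset hdisj fun T _ => hmeasE T]
  have hprod : ∀ T : Finset (Fin n),
      (μ (E T)).toReal = (∏ j ∈ T, s j) * ∏ j ∈ univ \ T, (1 - s j) := by
    intro T
    have h1 : μ (E T) = ∏ j, μ (z j ⁻¹' {if j ∈ T then 1 else 0}) := by
      refine hind.meas_iInter fun j => ?_
      exact ⟨{if j ∈ T then 1 else 0}, measurableSet_singleton _, rfl⟩
    have hfact : ∀ j, (μ (z j ⁻¹' {if j ∈ T then 1 else 0})).toReal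
        = if j ∈ T then s j else 1 - s j := by
      intro j
      by_cases hj : j ∈ T
      · rw [if_pos hj, if_pos hj, ← hs j]
        congr 1
      · rw [if_neg hj, if_neg hj]
        have hc : z j ⁻¹' {0} = (z j ⁻¹' {1})ᶜ := by
          ext ω
          simp only [Set.mem_preimage, Set.mem_singleton_iff, Set.mem_compl_iff]
          rcases hval j ω with h | h <;> simp [h]
        have hm1 : MeasurableSet (z j ⁻¹' {1}) := (hmeas j) (measurableSet_singleton _)
        rw [hc, measure_compl hm1 (measure_ne_top μ _), measure_univ]
        rw [ENNReal.toReal_sub_of_le prob_le_one ENNReal.one_ne_top, ENNReal.toReal_one, ← hs j]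
        congr 2
    have h2 : (∏ j, (μ (z j ⁻¹' {if j ∈ T then 1 else 0})).toReal)
        = ∏ j, (if j ∈ T then s j else 1 - s j) :=
      Finset.prod_congr rfl fun j _ => hfact j
    have h3 : (∏ j, (if j ∈ T then s j else 1 - s j))
        = (∏ j ∈ T, s j) * ∏ j ∈ univ \ T, (1 - s j) := by
      have hu := Finset.prod_union (s₁ := T) (s₂ := univ \ T)
        (f := fun j => if j ∈ T then s j else 1 - s j) Finset.disjoint_sdiff
      rw [Finset.union_sdiff_of_subset (Finset.subset_univ T)] at hu
      rw [hu]
      exact congrArg₂ (· * ·) (Finset.prod_congr rfl fun j hj => if_pos hj)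
        (Finset.prod_congr rfl fun j hj => if_neg (Finset.mem_sdiff.1 hj).2)
    rw [h1, ENNReal.toReal_prod]
    exact h2.trans h3
  rw [hmeasure, ENNReal.toReal_sum fun T _ => measure_ne_top μ _, Wk]
  exact Finset.sum_congr rfl fun T _ => hprod T

end Stmt13

open MeasureTheory ProbabilityTheory Finset

theorem stmt_13 {Ω : Type*} [MeasurableSpace Ω] (μ : Measure Ω)
    [IsProbabilityMeasure μ] (n H : ℕ) (hn : 0 < n) (hH : 0 < H) (hHn : H ≤ n)
    (z : Fin n → Ω → ℕ) (s : Fin n → ℝ)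
    (hmeas : ∀ i, Measurable (z i))
    (hind : iIndepFun z μ)
    (hval : ∀ i ω, z i ω = 0 ∨ z i ω = 1)
    (hs : ∀ i, (μ {ω | z i ω = 1}).toReal = s i)
    (hs01 : ∀ i, s i ∈ Set.Icc (0:ℝ) 1) (S : ℝ) (hS : S = ∑ i, s i) :
    ∑ i ∈ Finset.range H, ((H : ℝ) - i) * (μ {ω | (∑ j, z j ω) = i}).toReal
      ≤ ∑ i ∈ Finset.range H,
          ((H : ℝ) - i) * (n.choose i) * (S / n) ^ i * (1 - S / n) ^ (n - i) := by
  classical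
  have key : ∀ k, (μ {ω | (∑ j, z j ω) = k}).toReal = Stmt13.Wk s k :=
    Stmt13.prob_eq_Wk z s hmeas hind hval hs
  calc ∑ i ∈ Finset.range H, ((H : ℝ) - i) * (μ {ω | (∑ j, z j ω) = i}).toReal
      = ∑ k ∈ Finset.range H, ((H : ℝ) - k) * Stmt13.Wk s k :=
        Finset.sum_congr rfl fun k _ => by rw [key k]
    _ = Stmt13.Fg (Stmt13.gH H) s univ := (Stmt13.Fg_eq_sum_range hHn s).symm
    _ ≤ Stmt13.Fg (Stmt13.gH H) (fun _ : Fin n => S / n) univ :=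
        Stmt13.equalize hn S _ s le_rfl hs01 hS.symm
    _ = ∑ i ∈ Finset.range H,
          ((H : ℝ) - i) * (n.choose i) * (S / n) ^ i * (1 - S / n) ^ (n - i) :=
        Stmt13.Fg_const hHn (S / n)
end

section
/- Suppose x_i^j ∈ [0,1] for all i, j ∈ [n], and for each j ∈ [n], ∑_{i∈[n]} x_i^j ≤ j. If α_1 ≥ α_2 ≥ ... ≥ α_n ≥ 0 and α_{n+1} = 0, then x_i := ∑_{j∈[n]} (α_j − α_{j+1}) x_i^j satisfies ∑_{i∈S} x_i ≤ ∑_{j=1}^{|S|} α_j for every subset S ⊆ [n]. -/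
open Finset

lemma tele_aux (f : ℕ → ℝ) (a : ℕ) : ∀ b, a ≤ b →
    ∑ j ∈ Finset.Icc a b, (f j - f (j + 1)) = f a - f (b + 1) := by
  intro b
  induction b with
  | zero => intro h; interval_cases a; simp
  | succ b ih =>
    intro h
    rcases Nat.lt_or_ge a (b + 1) with h' | h'
    · rw [Finset.sum_Icc_succ_top (by omega), ih (by omega)]
      ring
    · have : a = b + 1 := by omega
      subst this; simp

theorem stmt_18 (n : ℕ) (hn : 1 ≤ n) (α : ℕ → ℝ)
    (hmono : ∀ j, 1 ≤ j → j ≤ n → α (j + 1) ≤ α j)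
    (hnonneg : 0 ≤ α n) (htop : α (n + 1) = 0)
    (x : ℕ → ℕ → ℝ)
    (hx01 : ∀ i ∈ Finset.Icc 1 n, ∀ j ∈ Finset.Icc 1 n, x i j ∈ Set.Icc (0:ℝ) 1)
    (hcol : ∀ j ∈ Finset.Icc 1 n, ∑ i ∈ Finset.Icc 1 n, x i j ≤ (j : ℝ)) :
    ∀ S ⊆ Finset.Icc 1 n,
      ∑ i ∈ S, (∑ j ∈ Finset.Icc 1 n, (α j - α (j + 1)) * x i j)
        ≤ ∑ j ∈ Finset.Icc 1 S.card, α j := by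
  intro S hS
  set k := S.card with hkdef
  have hk : k ≤ n := by
    have := Finset.card_le_card hS
    simpa [Nat.card_Icc] using this
  have hdiff : ∀ j ∈ Finset.Icc 1 n, 0 ≤ α j - α (j + 1) := by
    intro j hj
    rw [Finset.mem_Icc] at hj
    have := hmono j hj.1 hj.2
    linarith
  -- bound on column partial sums
  have hmin : ∀ j ∈ Finset.Icc 1 n, ∑ i ∈ S, x i j ≤ ((min j k : ℕ) : ℝ) := by
    intro j hj
    rcases Nat.le_total j k with h | h
    · rw [min_eq_left h]
      calc ∑ i ∈ S, x i j ≤ ∑ i ∈ Finset.Icc 1 n, x i j := by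
            apply Finset.sum_le_sum_of_subset_of_nonneg hS
            intro i hi _
            exact (hx01 i hi j hj).1
        _ ≤ (j : ℝ) := hcol j hj
    · rw [min_eq_right h]
      calc ∑ i ∈ S, x i j ≤ ∑ i ∈ S, (1 : ℝ) := by
            apply Finset.sum_le_sum
            intro i hi
            exact (hx01 i (hS hi) j hj).2
        _ = (k : ℝ) := by simp [hkdef]
  -- key identity
  have key : ∑ j ∈ Finset.Icc 1 n, (α j - α (j + 1)) * ((min j k : ℕ) : ℝ)
      = ∑ m ∈ Finset.Icc 1 k, α m := by
    have h1 : ∀ j ∈ Finset.Icc 1 n, (α j - α (j + 1)) * ((min j k : ℕ) : ℝ)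
        = ∑ m ∈ Finset.Icc 1 n, (if m ≤ j ∧ m ≤ k then α j - α (j + 1) else 0) := by
      intro j hj
      rw [Finset.mem_Icc] at hj
      rw [← Finset.sum_filter]
      have hfil : Finset.filter (fun m => m ≤ j ∧ m ≤ k) (Finset.Icc 1 n)
          = Finset.Icc 1 (min j k) := by
        ext m
        simp only [Finset.mem_filter, Finset.mem_Icc, le_min_iff]
        omega
      rw [hfil, Finset.sum_const, Nat.card_Icc]
      simp [mul_comm]
    rw [Finset.sum_congr rfl h1, Finset.sum_comm]
    have h2 : ∀ m ∈ Finset.Icc 1 n,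
        ∑ j ∈ Finset.Icc 1 n, (if m ≤ j ∧ m ≤ k then α j - α (j + 1) else 0)
        = if m ≤ k then α m else 0 := by
      intro m hm
      rw [Finset.mem_Icc] at hm
      by_cases hmk : m ≤ k
      · simp only [hmk, and_true, if_true]
        rw [← Finset.sum_filter]
        have hfil : Finset.filter (fun j => m ≤ j) (Finset.Icc 1 n)
            = Finset.Icc m n := by
          ext j
          simp only [Finset.mem_filter, Finset.mem_Icc]
          omega
        rw [hfil, tele_aux α m n (by omega), htop, sub_zero]
      · simp [hmk]
    rw [Finset.sum_congr rfl h2, ← Finset.sum_filter]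
    congr 1
    ext m
    simp only [Finset.mem_filter, Finset.mem_Icc]
    omega
  calc ∑ i ∈ S, (∑ j ∈ Finset.Icc 1 n, (α j - α (j + 1)) * x i j)
      = ∑ j ∈ Finset.Icc 1 n, (α j - α (j + 1)) * ∑ i ∈ S, x i j := by
        rw [Finset.sum_comm]
        exact Finset.sum_congr rfl fun j _ => (Finset.mul_sum _ _ _).symm
    _ ≤ ∑ j ∈ Finset.Icc 1 n, (α j - α (j + 1)) * ((min j k : ℕ) : ℝ) := by
        apply Finset.sum_le_sum
        intro j hj
        exact mul_le_mul_of_nonneg_left (hmin j hj) (hdiff j hj)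
    _ = ∑ m ∈ Finset.Icc 1 k, α m := key
end
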